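/- For every t > 0, every x ∈ (0,1), and every y ∈ (1/2, 1), one has ((y/(2−y))^2 − 1 < p(t,1,y)/p(t,1,2−y) − 1 < ((2−y)/y)^{2μ+4} − 1, where p(t,a,b) = (1/(2t)) (ab)^{−μ} exp(−(a²+b²)/(2t)) I_μ(ab/t) is the transition density (with respect to the speed measure) of the Bessel process with index μ > -1 reflected at 0. -/

import Mathlib

open Real

/-- Modified Bessel function of the first kind. -/
noncomputable def besselI (μ z : ℝ) : ℝ :=
  ∑' k : ℕ, (z / 2) ^ (μ + 2 * (k : ℝ)) / ((Nat.factorial k : ℝ) * Real.Gamma ((k : ℝ) + μ + 1))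

/-- Transition density (w.r.t. the speed measure) of the reflected Bessel process. -/
noncomputable def besselDensity (μ t a b : ℝ) : ℝ :=
  (1 / (2 * t)) * (a * b) ^ (-μ) * Real.exp (-(a ^ 2 + b ^ 2) / (2 * t)) * besselI μ (a * b / t)

namespace BesselAux

noncomputable def bD (μ : ℝ) (k : ℕ) : ℝ :=
  1 / (4 ^ k * (Nat.factorial k : ℝ) * Real.Gamma ((k : ℝ) + μ + 1))

lemma gamma_arg_pos {μ : ℝ} (hμ : -1 < μ) (k : ℕ) : 0 < (k : ℝ) + μ + 1 := by
  have : (0:ℝ) ≤ k := Nat.cast_nonneg k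
  linarith

lemma bD_pos {μ : ℝ} (hμ : -1 < μ) (k : ℕ) : 0 < bD μ k := by
  have h1 : 0 < Real.Gamma ((k : ℝ) + μ + 1) := Real.Gamma_pos_of_pos (gamma_arg_pos hμ k)
  have h2 : (0:ℝ) < Nat.factorial k := by exact_mod_cast Nat.factorial_pos k
  unfold bD; positivity

lemma bD_succ {μ : ℝ} (hμ : -1 < μ) (k : ℕ) :
    bD μ k = 4 * ((k : ℝ) + 1) * ((k : ℝ) + 1 + μ) * bD μ (k + 1) := by
  have h1 : 0 < Real.Gamma ((k : ℝ) + μ + 1) := Real.Gamma_pos_of_pos (gamma_arg_pos hμ k)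
  have h2 : (0:ℝ) < Nat.factorial k := by exact_mod_cast Nat.factorial_pos k
  have harg : ((k+1 : ℕ) : ℝ) + μ + 1 = ((k : ℝ) + μ + 1) + 1 := by push_cast; ring
  have hG : Real.Gamma (((k+1:ℕ):ℝ) + μ + 1) = ((k:ℝ)+μ+1) * Real.Gamma ((k:ℝ)+μ+1) := by
    rw [harg, Real.Gamma_add_one (ne_of_gt (gamma_arg_pos hμ k))]
  unfold bD
  rw [hG]
  have hf : ((Nat.factorial (k+1) : ℕ) : ℝ) = ((k:ℝ)+1) * (Nat.factorial k : ℝ) := by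
    push_cast [Nat.factorial_succ]; ring
  rw [hf]
  have h4 : (4:ℝ)^(k+1) = 4 * 4^k := by ring
  rw [h4]
  have hμ1 : ((k:ℝ)+μ+1) ≠ 0 := ne_of_gt (gamma_arg_pos hμ k)
  have hk1 : ((k:ℝ)+1) ≠ 0 := by positivity
  have h4k : (4:ℝ)^k ≠ 0 := by positivity
  field_simp
  ring

lemma summable_master {μ : ℝ} (hμ : -1 < μ) {y : ℝ} (hy : 0 ≤ y) :
    Summable fun k : ℕ => ((k : ℝ) + 1) ^ 2 * bD μ k * y ^ k := by
  apply summable_of_ratio_norm_eventually_le (r := 1/2) (by norm_num)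
  filter_upwards [Filter.eventually_ge_atTop (Nat.ceil (2*y))] with k hk
  have hck : (2*y) ≤ (k:ℝ) := le_trans (Nat.le_ceil _) (by exact_mod_cast hk)
  have hd1 : 0 < bD μ (k+1) := bD_pos hμ _
  have hd0 : 0 < bD μ k := bD_pos hμ _
  have hrec := bD_succ hμ k
  have hyk : (0:ℝ) ≤ y^k := by positivity
  have hkc : (0:ℝ) ≤ (k:ℝ) := Nat.cast_nonneg k
  rw [Real.norm_eq_abs, Real.norm_eq_abs, abs_of_nonneg (by positivity),
    abs_of_nonneg (by positivity)]
  rw [hrec]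
  push_cast
  rw [pow_succ y k]
  set c : ℝ := (k:ℝ) with hc
  set d : ℝ := bD μ (k+1) with hd
  set q : ℝ := y^k with hq
  have h4c : (0:ℝ) ≤ 4*(c+1)^3 - (c+2)^2 := by nlinarith [hkc, mul_nonneg hkc hkc, mul_nonneg (mul_nonneg hkc hkc) hkc]
  have h1 : (0:ℝ) ≤ (c+2)^2 * (d*q) * (c - 2*y) := by
    apply mul_nonneg (mul_nonneg (sq_nonneg _) (mul_nonneg hd1.le hyk))
    linarith
  have h2 : (0:ℝ) ≤ (4*(c+1)^3 - (c+2)^2) * c * (d*q) :=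
    mul_nonneg (mul_nonneg h4c hkc) (mul_nonneg hd1.le hyk)
  have h3 : (0:ℝ) ≤ (c+1)^3 * (μ+1) * (d*q) := by
    apply mul_nonneg (mul_nonneg (by positivity) (by linarith)) (mul_nonneg hd1.le hyk)
  nlinarith [h1, h2, h3]

noncomputable def bG (μ x : ℝ) : ℝ := ∑' k : ℕ, bD μ k * x ^ (2*k)

noncomputable def bG' (μ x : ℝ) : ℝ := ∑' k : ℕ, bD μ k * ((2*k : ℕ) : ℝ) * x ^ (2*k - 1)

lemma summable_aux {μ : ℝ} (hμ : -1 < μ) (x : ℝ) (C : ℝ) (f : ℕ → ℝ)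
    (h0 : ∀ k, 0 ≤ f k)
    (hle : ∀ k, f k ≤ C * (((k:ℝ)+1)^2 * bD μ k * (x^2) ^ k)) : Summable f :=
  Summable.of_nonneg_of_le h0 hle ((summable_master hμ (sq_nonneg x)).mul_left C)

lemma summable_bG {μ : ℝ} (hμ : -1 < μ) (z : ℝ) :
    Summable (fun k : ℕ => bD μ k * z ^ (2*k)) := by
  apply summable_aux hμ z 1 _ (fun k => ?_) (fun k => ?_)
  · rw [pow_mul]
    exact mul_nonneg (bD_pos hμ k).le (by positivity)
  · rw [pow_mul]
    have h1 : (1:ℝ) ≤ ((k:ℝ)+1)^2 := by nlinarith [Nat.cast_nonneg (α := ℝ) k]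
    have := bD_pos hμ k
    nlinarith [mul_nonneg this.le (pow_nonneg (sq_nonneg z) k), mul_nonneg (mul_nonneg this.le (pow_nonneg (sq_nonneg z) k)) (by nlinarith [Nat.cast_nonneg (α := ℝ) k] : (0:ℝ) ≤ ((k:ℝ)+1)^2 - 1)]

lemma bG_pos {μ : ℝ} (hμ : -1 < μ) (z : ℝ) : 0 < bG μ z := by
  apply (summable_bG hμ z).tsum_pos (fun k => ?_) 0
  · simpa using bD_pos hμ 0
  · rw [pow_mul]
    exact mul_nonneg (bD_pos hμ k).le (by positivity)

lemma summable_bG' {μ : ℝ} (hμ : -1 < μ) {R : ℝ} (hR : 0 < R) :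
    Summable (fun k : ℕ => bD μ k * ((2*k : ℕ) : ℝ) * R ^ (2*k - 1)) := by
  apply summable_aux hμ R (2/R) _ (fun k => ?_) (fun k => ?_)
  · have := bD_pos hμ k
    positivity
  · match k with
    | 0 => simp; nlinarith [mul_pos (div_pos two_pos hR) (bD_pos hμ 0)]
    | (n+1) =>
      have hd : 0 < bD μ (n+1) := bD_pos hμ _
      have he : 2*(n+1) - 1 = 2*n+1 := by omega
      rw [he]
      have h1 : R ^ (2*n+1) = (R^2)^n * R := by
        rw [pow_succ, pow_mul]
      have h2 : (R^2) ^ (n+1) = (R^2)^n * R^2 := pow_succ _ n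
      rw [h1, h2]
      have hq : (0:ℝ) ≤ (R^2)^n := by positivity
      push_cast
      have : (0:ℝ) < R := hR
      rw [div_mul_eq_mul_div, le_div_iff₀ this]
      have h3 : (0:ℝ) ≤ ((n:ℝ)+1+1)^2 - ((n:ℝ)+1) := by nlinarith [Nat.cast_nonneg (α := ℝ) n]
      nlinarith [mul_nonneg (mul_nonneg (mul_nonneg h3 hd.le) hq) (sq_nonneg R)]

lemma hasDerivAt_bG {μ : ℝ} (hμ : -1 < μ) (x : ℝ) : HasDerivAt (bG μ) (bG' μ x) x := by
  have hR0 : (0:ℝ) < |x| + 1 := by positivity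
  have hxR : x ∈ Metric.ball (0:ℝ) (|x|+1) := by
    simpa [Metric.mem_ball, Real.dist_eq] using lt_add_one |x|
  apply hasDerivAt_of_tendstoUniformlyOn (l := Filter.atTop) (f := fun (n:ℕ) (z:ℝ) => ∑ k ∈ Finset.range n, bD μ k * z^(2*k))
      (f' := fun n (z:ℝ) => ∑ k ∈ Finset.range n, bD μ k * ((2*k : ℕ) : ℝ) * z^(2*k-1))
      Metric.isOpen_ball ?_ ?_ ?_ hxR
  · have hb : ∀ (k : ℕ) (z : ℝ), z ∈ Metric.ball (0:ℝ) (|x|+1) →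
        ‖bD μ k * ((2*k : ℕ) : ℝ) * z^(2*k-1)‖ ≤ bD μ k * ((2*k : ℕ) : ℝ) * (|x|+1)^(2*k-1) := by
      intro k z hz
      have hzR : |z| ≤ |x|+1 := by
        rw [Metric.mem_ball, Real.dist_eq, sub_zero] at hz
        exact hz.le
      have hd := bD_pos hμ k
      rw [norm_mul, norm_mul, Real.norm_eq_abs, Real.norm_eq_abs, Real.norm_eq_abs,
        abs_of_pos hd, abs_of_nonneg (by positivity)]
      gcongr bD μ k * ((2*k : ℕ) : ℝ) * ?_
      calc |z ^ (2*k-1)| = |z|^(2*k-1) := abs_pow z _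
        _ ≤ (|x|+1)^(2*k-1) := by gcongr
    exact tendstoUniformlyOn_tsum_nat (summable_bG' hμ hR0) hb
  · apply Filter.Eventually.of_forall
    intro n z hz
    apply HasDerivAt.fun_sum
    intro k hk
    have := (hasDerivAt_pow (2*k) z).const_mul (bD μ k)
    rw [mul_assoc]
    exact this
  · intro z hz
    exact (summable_bG hμ z).hasSum.tendsto_sum_nat

noncomputable def bU (μ x : ℝ) : ℕ → ℝ
  | 0 => 0
  | (k+1) => 2 * ((k:ℝ))^2 * bD μ (k+1) * x^(2*k+1)

noncomputable def bV (μ x : ℝ) : ℕ → ℝ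
  | 0 => 0
  | (k+1) => ((k:ℝ)+1+μ) * bD μ (k+1) * x^(2*k+2)

lemma cast_sq_le {k : ℕ} : (1:ℝ) ≤ ((k:ℝ)+1)^2 := by nlinarith [Nat.cast_nonneg (α := ℝ) k]

lemma summable_S3 {μ : ℝ} (hμ : -1 < μ) {x : ℝ} (hx : 0 ≤ x) :
    Summable (fun k : ℕ => bD μ k * x ^ (2*k+1)) := by
  apply summable_aux hμ x x _ (fun k => ?_) (fun k => ?_)
  · have := bD_pos hμ k; positivity
  · have hd := bD_pos hμ k
    have hq : (0:ℝ) ≤ (x^2)^k := by positivity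
    rw [pow_succ, pow_mul]
    nlinarith [mul_nonneg (mul_nonneg hd.le hq) hx,
      mul_nonneg (mul_nonneg (mul_nonneg hd.le hq) hx) (by nlinarith [Nat.cast_nonneg (α := ℝ) k] : (0:ℝ) ≤ ((k:ℝ)+1)^2 - 1)]

lemma summable_S4 {μ : ℝ} (hμ : -1 < μ) (x : ℝ) :
    Summable (fun k : ℕ => bD μ k * ((2*k : ℕ) : ℝ) * x ^ (2*k)) := by
  apply summable_aux hμ x 2 _ (fun k => ?_) (fun k => ?_)
  · have := bD_pos hμ k
    rw [pow_mul]
    positivity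
  · have hd := bD_pos hμ k
    have hq : (0:ℝ) ≤ (x^2)^k := by positivity
    rw [pow_mul]
    push_cast
    nlinarith [mul_nonneg hd.le hq, mul_nonneg (mul_nonneg hd.le hq) (Nat.cast_nonneg (α := ℝ) k),
      mul_nonneg (mul_nonneg (mul_nonneg hd.le hq) (Nat.cast_nonneg (α := ℝ) k)) (Nat.cast_nonneg (α := ℝ) k)]

lemma summable_g2 {μ : ℝ} (hμ : -1 < μ) (x : ℝ) :
    Summable (fun k : ℕ => ((k:ℝ)+1) * (bD μ k * x ^ (2*k))) := by
  apply summable_aux hμ x 1 _ (fun k => ?_) (fun k => ?_)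
  · have := bD_pos hμ k
    rw [pow_mul]
    positivity
  · have hd := bD_pos hμ k
    have hq : (0:ℝ) ≤ (x^2)^k := by positivity
    rw [pow_mul]
    nlinarith [mul_nonneg (mul_nonneg hd.le hq) (Nat.cast_nonneg (α := ℝ) k),
      mul_nonneg (mul_nonneg (mul_nonneg hd.le hq) (Nat.cast_nonneg (α := ℝ) k)) (Nat.cast_nonneg (α := ℝ) k)]

lemma bU_nonneg {μ : ℝ} (hμ : -1 < μ) {x : ℝ} (hx : 0 ≤ x) (k : ℕ) : 0 ≤ bU μ x k := by
  match k with
  | 0 => simp [bU]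
  | (n+1) =>
    have := bD_pos hμ (n+1)
    simp only [bU]
    positivity

lemma bU_succ_le {μ : ℝ} (hμ : -1 < μ) {x : ℝ} (hx : 0 ≤ x) (k : ℕ) :
    bU μ x (k+1) ≤ 1/2 * (bD μ k * x^(2*k+1)) := by
  simp only [bU]
  rw [bD_succ hμ k]
  have hd := bD_pos hμ (k+1)
  have hp : (0:ℝ) ≤ x^(2*k+1) := by positivity
  have hfac : (0:ℝ) ≤ ((k:ℝ)+1)*((k:ℝ)+1+μ) - (k:ℝ)^2 := by nlinarith [Nat.cast_nonneg (α := ℝ) k]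
  nlinarith [mul_nonneg (mul_nonneg hfac hd.le) hp]

lemma summable_bU {μ : ℝ} (hμ : -1 < μ) {x : ℝ} (hx : 0 ≤ x) : Summable (bU μ x) := by
  rw [← summable_nat_add_iff 1]
  apply Summable.of_nonneg_of_le (fun k => bU_nonneg hμ hx (k+1)) (fun k => bU_succ_le hμ hx k)
    ((summable_S3 hμ hx).mul_left (1/2))

lemma summable_bVsucc {μ : ℝ} (hμ : -1 < μ) (x : ℝ) :
    Summable (fun k : ℕ => bV μ x (k+1)) := by
  apply summable_aux hμ x (x^2) _ (fun k => ?_) (fun k => ?_)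
  · have hd := bD_pos hμ (k+1)
    have hm : (0:ℝ) ≤ (k:ℝ)+1+μ := by nlinarith [Nat.cast_nonneg (α := ℝ) k]
    simp only [bV]
    rw [show 2*k+2 = 2*(k+1) from by omega, pow_mul]
    positivity
  · simp only [bV]
    have hd := bD_pos hμ (k+1)
    have hq : (0:ℝ) ≤ (x^2)^k := by positivity
    have hrec := bD_succ hμ k
    have hbv : ((k:ℝ)+1+μ) * bD μ (k+1) * x^(2*k+2) = bD μ k * x^(2*k+2) / (4*((k:ℝ)+1)) := by
      rw [hrec]; field_simp
    rw [hbv, show 2*k+2 = 2*k+1+1 from rfl, pow_succ, pow_succ, pow_mul]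
    have hd0 := bD_pos hμ k
    rw [div_le_iff₀ (by positivity : (0:ℝ) < 4*((k:ℝ)+1))]
    nlinarith [mul_nonneg (mul_nonneg hd0.le hq) (sq_nonneg x),
      mul_nonneg (mul_nonneg (mul_nonneg hd0.le hq) (sq_nonneg x)) (Nat.cast_nonneg (α := ℝ) k),
      mul_nonneg (mul_nonneg (mul_nonneg (mul_nonneg hd0.le hq) (sq_nonneg x)) (Nat.cast_nonneg (α := ℝ) k)) (Nat.cast_nonneg (α := ℝ) k)]

lemma summable_bV {μ : ℝ} (hμ : -1 < μ) (x : ℝ) : Summable (bV μ x) := by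
  rw [← summable_nat_add_iff 1]
  exact summable_bVsucc hμ x

lemma keyL {μ : ℝ} (hμ : -1 < μ) {x : ℝ} (hx : 0 < x) :
    x * bG' μ x < x * bG μ x + 2 * bG μ x := by
  have hx0 := hx.le
  have S1 := summable_bG hμ x
  have S3 := summable_S3 hμ hx0
  have S4 := summable_S4 hμ x
  have SU := summable_bU hμ hx0
  have e1 : x * bG' μ x = ∑' k : ℕ, bD μ k * ((2*k : ℕ) : ℝ) * x^(2*k) := by
    rw [bG', ← tsum_mul_left]
    apply tsum_congr; intro k
    match k with
    | 0 => simp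
    | (n+1) =>
      rw [show 2*(n+1) - 1 = 2*n+1 from by omega, show 2*(n+1) = (2*n+1)+1 from by omega,
        pow_succ]
      ring
  have e2 : x * bG μ x = ∑' k : ℕ, bD μ k * x^(2*k+1) := by
    rw [bG, ← tsum_mul_left]
    apply tsum_congr; intro k
    rw [pow_succ]; ring
  have e3 : (2:ℝ) * bG μ x = ∑' k : ℕ, 2 * (bD μ k * x^(2*k)) := by
    rw [bG, ← tsum_mul_left]
  have hterm : ∀ k : ℕ, bD μ k * ((2*k : ℕ) : ℝ) * x^(2*k) ≤
      (2*(bD μ k * x^(2*k)) + 1/2 * (bD μ k * x^(2*k+1))) + bU μ x k := by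
    intro k
    match k with
    | 0 =>
      simp only [bU]
      have := bD_pos hμ 0
      simp
      nlinarith [mul_pos this hx]
    | 1 =>
      simp only [bU]
      have := bD_pos hμ 1
      push_cast
      nlinarith [mul_pos this (pow_pos hx 3)]
    | (j+2) =>
      simp only [bU]
      have hd := bD_pos hμ (j+2)
      have hp : (0:ℝ) ≤ x^(2*j+3) := by positivity
      have hA : x^(2*(j+2)) = x^(2*j+3) * x := by
        rw [show 2*(j+2) = (2*j+3)+1 from by omega, pow_succ]
      have hB : x^(2*(j+2)+1) = x^(2*j+3) * x^2 := by
        rw [show 2*(j+2)+1 = (2*j+3)+2 from by omega, pow_add]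
      have hC : x^(2*(j+1)+1) = x^(2*j+3) := by rw [show 2*(j+1)+1 = 2*j+3 from by omega]
      rw [hA, hB, hC]
      push_cast
      nlinarith [mul_nonneg (mul_nonneg hd.le hp) (sq_nonneg (x - 2*((j:ℝ)+1)))]
  have SB : Summable (fun k : ℕ => (2*(bD μ k * x^(2*k)) + 1/2 * (bD μ k * x^(2*k+1))) + bU μ x k) :=
    ((S1.mul_left 2).add (S3.mul_left (1/2))).add SU
  have hmain : (∑' k : ℕ, bD μ k * ((2*k : ℕ) : ℝ) * x^(2*k)) ≤
      ((∑' k : ℕ, 2*(bD μ k * x^(2*k))) + ∑' k : ℕ, 1/2 * (bD μ k * x^(2*k+1))) + ∑' k : ℕ, bU μ x k := by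
    calc (∑' k : ℕ, bD μ k * ((2*k : ℕ) : ℝ) * x^(2*k))
        ≤ ∑' k : ℕ, ((2*(bD μ k * x^(2*k)) + 1/2 * (bD μ k * x^(2*k+1))) + bU μ x k) :=
          S4.tsum_le_tsum hterm SB
      _ = _ := by
          rw [((S1.mul_left 2).add (S3.mul_left (1/2))).tsum_add SU,
            (S1.mul_left 2).tsum_add (S3.mul_left (1/2))]
  have SUs : Summable (fun k : ℕ => bU μ x (k+1)) := (summable_nat_add_iff 1).mpr SU
  have hUlt : (∑' k : ℕ, bU μ x k) < ∑' k : ℕ, 1/2 * (bD μ k * x^(2*k+1)) := by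
    rw [SU.tsum_eq_zero_add, show bU μ x 0 = 0 from rfl, zero_add]
    apply Summable.tsum_lt_tsum (i := 0) (fun n => bU_succ_le hμ hx0 n) _ SUs (S3.mul_left (1/2))
    have h1 : bU μ x 1 = 0 := by simp [bU]
    have := bD_pos hμ 0
    simp only [h1]
    positivity
  have hhalf : (∑' k : ℕ, 1/2 * (bD μ k * x^(2*k+1))) = 1/2 * ∑' k : ℕ, bD μ k * x^(2*k+1) :=
    tsum_mul_left
  rw [e1, e2, e3]
  rw [hhalf] at hmain hUlt
  linarith

lemma keyU {μ : ℝ} (hμ : -1 < μ) {x : ℝ} (hx : 0 < x) :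
    x * bG μ x < x * bG' μ x + (2*μ+4) * bG μ x := by
  have hx0 := hx.le
  have S1 := summable_bG hμ x
  have S3 := summable_S3 hμ hx0
  have S4 := summable_S4 hμ x
  have SV := summable_bV hμ x
  have SVs := summable_bVsucc hμ x
  have Sg2 := summable_g2 hμ x
  have e1 : x * bG' μ x = ∑' k : ℕ, bD μ k * ((2*k : ℕ) : ℝ) * x^(2*k) := by
    rw [bG', ← tsum_mul_left]
    apply tsum_congr; intro k
    match k with
    | 0 => simp
    | (n+1) =>
      rw [show 2*(n+1) - 1 = 2*n+1 from by omega, show 2*(n+1) = (2*n+1)+1 from by omega,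
        pow_succ]
      ring
  have e2 : x * bG μ x = ∑' k : ℕ, bD μ k * x^(2*k+1) := by
    rw [bG, ← tsum_mul_left]
    apply tsum_congr; intro k
    rw [pow_succ]; ring
  have e4 : (2*μ+4) * bG μ x = ∑' k : ℕ, (2*μ+4) * (bD μ k * x^(2*k)) := by
    rw [bG, ← tsum_mul_left]
  have hW : ∀ k : ℕ, bD μ k * x^(2*k+1) ≤ bV μ x (k+1) + ((k:ℝ)+1) * (bD μ k * x^(2*k)) := by
    intro k
    simp only [bV]
    rw [bD_succ hμ k]
    have hd := bD_pos hμ (k+1)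
    have hm : (0:ℝ) < ((k:ℝ)+1+μ) * bD μ (k+1) := by
      apply mul_pos _ hd
      nlinarith [Nat.cast_nonneg (α := ℝ) k]
    have hp : (0:ℝ) ≤ x^(2*k) := by positivity
    have hA : x^(2*k+1) = x^(2*k) * x := pow_succ x (2*k)
    have hB : x^(2*k+2) = x^(2*k) * x^2 := pow_add x (2*k) 2
    rw [hA, hB]
    nlinarith [mul_nonneg (mul_nonneg hm.le hp) (sq_nonneg (x - 2*((k:ℝ)+1)))]
  have SW : Summable (fun k : ℕ => bV μ x (k+1) + ((k:ℝ)+1) * (bD μ k * x^(2*k))) :=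
    SVs.add Sg2
  have hstep1 : (∑' k : ℕ, bD μ k * x^(2*k+1)) ≤
      (∑' k : ℕ, bV μ x k) + ∑' k : ℕ, ((k:ℝ)+1) * (bD μ k * x^(2*k)) := by
    calc (∑' k : ℕ, bD μ k * x^(2*k+1))
        ≤ ∑' k : ℕ, (bV μ x (k+1) + ((k:ℝ)+1) * (bD μ k * x^(2*k))) := S3.tsum_le_tsum hW SW
      _ = (∑' k : ℕ, bV μ x (k+1)) + ∑' k : ℕ, ((k:ℝ)+1) * (bD μ k * x^(2*k)) :=
          SVs.tsum_add Sg2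
      _ = (∑' k : ℕ, bV μ x k) + ∑' k : ℕ, ((k:ℝ)+1) * (bD μ k * x^(2*k)) := by
          rw [SV.tsum_eq_zero_add]
          simp [bV]
  have hstep2 : (∑' k : ℕ, bV μ x k) + (∑' k : ℕ, ((k:ℝ)+1) * (bD μ k * x^(2*k))) <
      (∑' k : ℕ, bD μ k * ((2*k : ℕ) : ℝ) * x^(2*k)) + ∑' k : ℕ, (2*μ+4) * (bD μ k * x^(2*k)) := by
    rw [← SV.tsum_add Sg2, ← S4.tsum_add (S1.mul_left _)]
    apply Summable.tsum_lt_tsum (i := 0) _ _ (SV.add Sg2) (S4.add (S1.mul_left _))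
    · intro k
      match k with
      | 0 =>
        simp only [bV]
        have := bD_pos hμ 0
        push_cast
        simp
        nlinarith
      | (n+1) =>
        simp only [bV]
        have hd := bD_pos hμ (n+1)
        have hp : (0:ℝ) ≤ x^(2*(n+1)) := by positivity
        have hC : x^(2*n+2) = x^(2*(n+1)) := by rw [show 2*n+2 = 2*(n+1) from by omega]
        rw [hC]
        push_cast
        nlinarith [mul_nonneg hd.le hp, mul_nonneg (mul_nonneg hd.le hp) (Nat.cast_nonneg (α := ℝ) n)]
    · simp only [bV]
      have := bD_pos hμ 0
      push_cast
      simp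
      nlinarith
  rw [e1, e2, e4]
  linarith

lemma antiL {μ : ℝ} (hμ : -1 < μ) :
    StrictAntiOn (fun x : ℝ => Real.exp (-x) * bG μ x / x^2) (Set.Ioi 0) := by
  apply strictAntiOn_of_deriv_neg (convex_Ioi 0)
  · intro z hz
    have hz0 : 0 < z := hz
    apply ContinuousAt.continuousWithinAt
    exact ((Real.continuous_exp.comp continuous_neg).continuousAt.mul
      (hasDerivAt_bG hμ z).continuousAt).div (continuous_pow 2).continuousAt
      (pow_ne_zero 2 hz0.ne')
  · intro z hz
    rw [interior_Ioi] at hz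
    have hz0 : 0 < z := hz
    have hG := hasDerivAt_bG hμ z
    have hE : HasDerivAt (fun x : ℝ => Real.exp (-x)) (Real.exp (-z) * (-1)) z :=
      (hasDerivAt_neg z).exp
    have hnum := hE.fun_mul hG
    have hf := hnum.fun_div (hasDerivAt_pow 2 z) (pow_ne_zero 2 hz0.ne')
    rw [hf.deriv]
    apply div_neg_of_neg_of_pos _ (by positivity)
    have key := keyL hμ hz0
    have hgpos := bG_pos hμ z
    have hepos := Real.exp_pos (-z)
    have hexpand : (Real.exp (-z) * (-1) * bG μ z + Real.exp (-z) * bG' μ z) * z ^ 2 -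
        Real.exp (-z) * bG μ z * (((2:ℕ):ℝ) * z ^ (2-1)) =
        (Real.exp (-z) * z) * (z * bG' μ z - (z * bG μ z + 2 * bG μ z)) := by
      push_cast
      ring
    rw [hexpand]
    exact mul_neg_of_pos_of_neg (by positivity) (by linarith)

lemma monoU {μ : ℝ} (hμ : -1 < μ) :
    StrictMonoOn (fun x : ℝ => Real.exp (-x) * x ^ (2*μ+4) * bG μ x) (Set.Ioi 0) := by
  apply strictMonoOn_of_deriv_pos (convex_Ioi 0)
  · intro z hz
    have hz0 : 0 < z := hz
    apply ContinuousAt.continuousWithinAt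
    exact ((Real.continuous_exp.comp continuous_neg).continuousAt.mul
      (Real.continuousAt_rpow_const z _ (Or.inl hz0.ne'))).mul
      (hasDerivAt_bG hμ z).continuousAt
  · intro z hz
    rw [interior_Ioi] at hz
    have hz0 : 0 < z := hz
    have hG := hasDerivAt_bG hμ z
    have hE : HasDerivAt (fun x : ℝ => Real.exp (-x)) (Real.exp (-z) * (-1)) z :=
      (hasDerivAt_neg z).exp
    have hP : HasDerivAt (fun x : ℝ => x ^ (2*μ+4)) ((2*μ+4) * z ^ (2*μ+3)) z := by
      have := Real.hasDerivAt_rpow_const (x := z) (p := 2*μ+4) (Or.inl hz0.ne')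
      convert this using 2
      ring
    have hf := (hE.fun_mul hP).fun_mul hG
    rw [hf.deriv]
    have key := keyU hμ hz0
    have hgpos := bG_pos hμ z
    have hepos := Real.exp_pos (-z)
    have hrp : (0:ℝ) < z ^ (2*μ+3) := Real.rpow_pos_of_pos hz0 _
    have hzp : z ^ (2*μ+4) = z ^ (2*μ+3) * z := by
      rw [← Real.rpow_add_one hz0.ne' (2*μ+3)]
      congr 1
      ring
    have hexpand : (Real.exp (-z) * (-1) * z ^ (2*μ+4) + Real.exp (-z) * ((2*μ+4) * z ^ (2*μ+3))) *
        bG μ z + Real.exp (-z) * z ^ (2*μ+4) * bG' μ z =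
        (Real.exp (-z) * z ^ (2*μ+3)) * (z * bG' μ z + (2*μ+4) * bG μ z - z * bG μ z) := by
      rw [hzp]
      ring
    rw [hexpand]
    exact mul_pos (by positivity) (by linarith)

lemma besselI_eq {μ : ℝ} (hμ : -1 < μ) {z : ℝ} (hz : 0 < z) :
    besselI μ z = (z/2) ^ μ * bG μ z := by
  rw [besselI, bG, ← tsum_mul_left]
  apply tsum_congr; intro k
  have hz2 : (0:ℝ) < z/2 := by linarith
  have h1 : (z/2) ^ (μ + 2*(k:ℝ)) = (z/2)^μ * (z/2)^(2*k : ℕ) := by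
    rw [Real.rpow_add hz2]
    congr 1
    rw [← Real.rpow_natCast (z/2) (2*k)]
    congr 1
    push_cast
    ring
  rw [h1]
  have h2 : (z/2)^(2*k : ℕ) = z^(2*k) / 4^k := by
    rw [div_pow, show ((2:ℝ))^(2*k) = 4^k from by rw [pow_mul]; norm_num]
  rw [h2, bD]
  have hG : (0:ℝ) < Real.Gamma ((k : ℝ) + μ + 1) := Real.Gamma_pos_of_pos (gamma_arg_pos hμ k)
  have hF : (0:ℝ) < (Nat.factorial k : ℝ) := by exact_mod_cast Nat.factorial_pos k
  have h4 : (0:ℝ) < (4:ℝ)^k := by positivity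
  field_simp

lemma density_eq {μ t : ℝ} (hμ : -1 < μ) (ht : 0 < t) {w : ℝ} (hw : 0 < w) :
    besselDensity μ t 1 w =
      (1/(2*t)) * (((2*t) ^ μ)⁻¹) * (Real.exp (-(1+w^2)/(2*t)) * bG μ (w/t)) := by
  have h2t : (0:ℝ) < 2*t := by linarith
  have hwt : (0:ℝ) < w/t := by positivity
  rw [besselDensity, one_mul, one_pow, besselI_eq hμ hwt]
  have hdiv : (w/t)/2 = w/(2*t) := by ring
  rw [hdiv, Real.div_rpow hw.le h2t.le, Real.rpow_neg hw.le]
  have hwμ : (0:ℝ) < w ^ μ := Real.rpow_pos_of_pos hw μ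
  have h2tμ : (0:ℝ) < (2*t) ^ μ := Real.rpow_pos_of_pos h2t μ
  field_simp

end BesselAux

open BesselAux

theorem density_ratio_at_one (μ t x y : ℝ) (hμ : -1 < μ) (ht : 0 < t)
    (hx1 : 0 < x) (hx2 : x < 1) (hy1 : 1/2 < y) (hy2 : y < 1) :
    (y / (2 - y)) ^ (2 : ℕ) - 1 <
      besselDensity μ t 1 y / besselDensity μ t 1 (2 - y) - 1 ∧
    besselDensity μ t 1 y / besselDensity μ t 1 (2 - y) - 1 <
      ((2 - y) / y) ^ (2 * μ + 4) - 1 := by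
  have hy0 : 0 < y := by linarith
  have h2y : 0 < 2 - y := by linarith
  have hyy : y < 2 - y := by linarith
  set a := y/t with ha_def
  set b := (2-y)/t with hb_def
  have ha : 0 < a := by rw [ha_def]; positivity
  have hb : 0 < b := by rw [hb_def]; positivity
  have hab : a < b := by
    rw [ha_def, hb_def]
    exact div_lt_div_of_pos_right hyy ht
  have hga := bG_pos hμ a
  have hgb := bG_pos hμ b
  have hK : (0:ℝ) < (1/(2*t)) * (((2*t) ^ μ)⁻¹) := by
    have h2t : (0:ℝ) < 2*t := by linarith
    have := Real.rpow_pos_of_pos h2t μ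
    positivity
  have hEq : besselDensity μ t 1 y / besselDensity μ t 1 (2-y) =
      Real.exp (b-a) * bG μ a / bG μ b := by
    rw [density_eq hμ ht hy0, density_eq hμ ht h2y]
    rw [mul_div_mul_left _ _ (ne_of_gt hK)]
    have hE : Real.exp (-(1+y^2)/(2*t)) / Real.exp (-(1+(2-y)^2)/(2*t)) = Real.exp (b-a) := by
      rw [← Real.exp_sub]
      congr 1
      rw [hb_def, ha_def]
      field_simp
      ring
    rw [← div_mul_div_comm, hE]
    exact (mul_div_assoc _ _ _).symm
  have hba1 : Real.exp b * Real.exp (-b) = 1 := by rw [← Real.exp_add]; simp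
  have hba2 : Real.exp b * Real.exp (-a) = Real.exp (b-a) := by
    rw [← Real.exp_add, ← sub_eq_add_neg]
  constructor
  · apply sub_lt_sub_right
    rw [hEq]
    have h2 := antiL hμ (Set.mem_Ioi.mpr ha) (Set.mem_Ioi.mpr hb) hab
    simp only at h2
    have hr : (y/(2-y)) = a/b := by
      rw [ha_def, hb_def]
      field_simp
    rw [hr, div_pow, div_lt_div_iff₀ (by positivity) hgb]
    rw [div_lt_div_iff₀ (by positivity) (by positivity)] at h2
    have hmul := mul_lt_mul_of_pos_left h2 (Real.exp_pos b)
    have e1 : Real.exp b * (Real.exp (-b) * bG μ b * a^2) = a^2 * bG μ b := by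
      rw [show Real.exp b * (Real.exp (-b) * bG μ b * a^2) =
        (Real.exp b * Real.exp (-b)) * (bG μ b * a^2) from by ring, hba1]
      ring
    have e2 : Real.exp b * (Real.exp (-a) * bG μ a * b^2) = Real.exp (b-a) * bG μ a * b^2 := by
      rw [show Real.exp b * (Real.exp (-a) * bG μ a * b^2) =
        (Real.exp b * Real.exp (-a)) * (bG μ a * b^2) from by ring, hba2]
      ring
    rw [e1, e2] at hmul
    linarith
  · apply sub_lt_sub_right
    rw [hEq]
    have h2 := monoU hμ (Set.mem_Ioi.mpr ha) (Set.mem_Ioi.mpr hb) hab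
    simp only at h2
    have hr : ((2-y)/y) = b/a := by
      rw [ha_def, hb_def]
      field_simp
    have hap : (0:ℝ) < a ^ (2*μ+4) := Real.rpow_pos_of_pos ha _
    have hbp : (0:ℝ) < b ^ (2*μ+4) := Real.rpow_pos_of_pos hb _
    rw [hr, Real.div_rpow hb.le ha.le, div_lt_div_iff₀ hgb hap]
    have hmul := mul_lt_mul_of_pos_left h2 (Real.exp_pos b)
    have e1 : Real.exp b * (Real.exp (-a) * a ^ (2*μ+4) * bG μ a) =
        Real.exp (b-a) * (a ^ (2*μ+4) * bG μ a) := by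
      rw [show Real.exp b * (Real.exp (-a) * a ^ (2*μ+4) * bG μ a) =
        (Real.exp b * Real.exp (-a)) * (a ^ (2*μ+4) * bG μ a) from by ring, hba2]
    have e2 : Real.exp b * (Real.exp (-b) * b ^ (2*μ+4) * bG μ b) =
        b ^ (2*μ+4) * bG μ b := by
      rw [show Real.exp b * (Real.exp (-b) * b ^ (2*μ+4) * bG μ b) =
        (Real.exp b * Real.exp (-b)) * (b ^ (2*μ+4) * bG μ b) from by ring, hba1]
      ring
    rw [e1, e2] at hmul
    nlinarith [hmul]
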